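/- If (U₁^{x₁⁰,y₁⁰,δ}, U₂^{t₂⁰,y₁⁰,y₂⁰,δ}) is an admissible pair of type 1 at scale δ, then for all z₁ ∈ U₁^{x₁⁰,y₁⁰,δ} and z₂ ∈ U₂^{t₂⁰,y₁⁰,y₂⁰,δ} one has |τ_{z₁}(z₁,z₂)| ∼_8 C₀² ε ρ² δ and |τ_{z₂}(z₁,z₂)| ∼_{1000} C₀² ε ρ² (1 ∨ δ). -/

import Mathlib

open Set MeasureTheory ENNReal Pointwise

noncomputable section

/-- `h` is a perturbation function of cubic type on `[-1,1]`,
with constants `C₃ > 0` and `Cl l` for `l ≥ 4`. -/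
def CubicType (C₃ : ℝ) (Cl : ℕ → ℝ) (h : ℝ → ℝ) : Prop :=
  ContDiff ℝ (⊤ : ℕ∞) h ∧ h 0 = 0 ∧ deriv h 0 = 0 ∧ deriv (deriv h) 0 = 0 ∧
  (∀ y ∈ Icc (-1 : ℝ) 1,
      C₃ / 4 ≤ |deriv (deriv (deriv h)) y| ∧ |deriv (deriv (deriv h)) y| ≤ C₃) ∧
  (∀ l : ℕ, 4 ≤ l → ∀ y ∈ Icc (-1 : ℝ) 1, |iteratedDeriv l h y| ≤ Cl l)

/-- The transversality quantity `τ_z(z₁,z₂)` for the phase `φ(x,y) = xy + ε h(y)`. -/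
def tau (ε : ℝ) (h : ℝ → ℝ) (z z₁ z₂ : ℝ × ℝ) : ℝ :=
  z₂.1 - z₁.1 + ε * (deriv h z₂.2 - deriv h z₁.2
      - (1 / 2) * deriv (deriv h) z.2 * (z₂.2 - z₁.2))

/-- A (positive) dyadic number. -/
def IsDyadic (x : ℝ) : Prop := ∃ k : ℤ, x = 2 ^ k

/-- The set `U₁^{x₁⁰, y₁⁰, δ}`. -/
def U1set (h : ℝ → ℝ) (ε ρ δ x₁0 y₁0 : ℝ) : Set (ℝ × ℝ) :=
  {z | 0 ≤ z.2 - y₁0 ∧ z.2 - y₁0 < ρ * min 1 δ ∧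
    0 ≤ z.1 - x₁0 + ε * (deriv (deriv h) y₁0 / 2) * (z.2 - y₁0) ∧
    z.1 - x₁0 + ε * (deriv (deriv h) y₁0 / 2) * (z.2 - y₁0) < ε * ρ ^ 2 * δ}

/-- The set `U₂^{t₂⁰, y₁⁰, y₂⁰, δ}`. -/
def U2set (h : ℝ → ℝ) (ε ρ δ t₂0 y₁0 y₂0 : ℝ) : Set (ℝ × ℝ) :=
  {z | 0 ≤ z.2 - y₂0 ∧ z.2 - y₂0 < ρ ∧
    0 ≤ z.1 - t₂0 + ε * (deriv h z.2 - deriv h y₁0 - deriv (deriv h) y₁0 / 2 * (z.2 - y₁0)) ∧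
    z.1 - t₂0 + ε * (deriv h z.2 - deriv h y₁0 - deriv (deriv h) y₁0 / 2 * (z.2 - y₁0))
      < ε * ρ ^ 2 * δ}

/-- The base point abscissa `x₂⁰` determined by `t₂⁰, y₁⁰, y₂⁰`. -/
def x20 (h : ℝ → ℝ) (ε t₂0 y₁0 y₂0 : ℝ) : ℝ :=
  t₂0 - ε * (deriv h y₂0 - deriv h y₁0 - deriv (deriv h) y₁0 / 2 * (y₂0 - y₁0))

/-- `(U₁^{x₁⁰,y₁⁰,δ}, U₂^{t₂⁰,y₁⁰,y₂⁰,δ})` is an admissible pair of type 1 at scales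
`δ, ρ`, contained in `V_{j₁,ρ} × V_{j₂,ρ}` (so `y₂⁰ = j₂ ρ`): grid conditions on the
parameters plus the two admissibility inequalities. -/
def Adm1 (h : ℝ → ℝ) (ε ρ δ C₀ : ℝ) (j₁ j₂ : ℤ) (x₁0 y₁0 t₂0 : ℝ) : Prop :=
  (∃ n : ℤ, x₁0 = -1 + (n : ℝ) * (ε * ρ ^ 2 * δ)) ∧ x₁0 ∈ Ico (-1 : ℝ) 1 ∧
  (∃ n : ℤ, t₂0 = -1 + (n : ℝ) * (ε * ρ ^ 2 * δ)) ∧ t₂0 ∈ Ico (-1 : ℝ) 1 ∧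
  (∃ n : ℤ, y₁0 = (j₁ : ℝ) * ρ + (n : ℝ) * (ρ * min 1 δ)) ∧
  (j₁ : ℝ) * ρ ≤ y₁0 ∧ y₁0 + ρ * min 1 δ ≤ (j₁ : ℝ) * ρ + ρ ∧
  C₀ ^ 2 / 4 * (ε * ρ ^ 2 * δ) ≤ |t₂0 - x₁0| ∧
  |t₂0 - x₁0| < 4 * C₀ ^ 2 * (ε * ρ ^ 2 * δ) ∧
  C₀ ^ 2 / 512 * (ε * ρ ^ 2 * max 1 δ) ≤
      |tau ε h (x20 h ε t₂0 y₁0 ((j₂ : ℝ) * ρ), (j₂ : ℝ) * ρ) (x₁0, y₁0)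
        (x20 h ε t₂0 y₁0 ((j₂ : ℝ) * ρ), (j₂ : ℝ) * ρ)| ∧
  |tau ε h (x20 h ε t₂0 y₁0 ((j₂ : ℝ) * ρ), (j₂ : ℝ) * ρ) (x₁0, y₁0)
        (x20 h ε t₂0 y₁0 ((j₂ : ℝ) * ρ), (j₂ : ℝ) * ρ)|
      < 5 * C₀ ^ 2 * (ε * ρ ^ 2 * max 1 δ)

/- auxiliary lemmas -/

lemma smooth_deriv2 {h : ℝ → ℝ} (hc : ContDiff ℝ (⊤ : ℕ∞) h) :
    ContDiff ℝ (⊤ : ℕ∞) (deriv (deriv h)) :=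
  (contDiff_infty_iff_deriv.mp (contDiff_infty_iff_deriv.mp hc).2).2

lemma lip_H2 {C₃ : ℝ} {h : ℝ → ℝ} (hc : ContDiff ℝ (⊤ : ℕ∞) h)
    (hb3 : ∀ y ∈ Icc (-1 : ℝ) 1, |deriv (deriv (deriv h)) y| ≤ C₃)
    {a b : ℝ} (ha : a ∈ Icc (-1 : ℝ) 1) (hb : b ∈ Icc (-1 : ℝ) 1) :
    |deriv (deriv h) b - deriv (deriv h) a| ≤ C₃ * |b - a| := by
  have hdiff : ∀ x ∈ Icc (-1 : ℝ) 1, DifferentiableAt ℝ (deriv (deriv h)) x := by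
    intro x _
    exact ((smooth_deriv2 hc).differentiable (by simp)) x
  have := (convex_Icc (-1 : ℝ) 1).norm_image_sub_le_of_norm_deriv_le hdiff
    (fun x hx => by simpa [Real.norm_eq_abs] using hb3 x hx) ha hb
  simpa [Real.norm_eq_abs] using this

lemma taylor_H1 {C₃ : ℝ} {h : ℝ → ℝ} (hc : ContDiff ℝ (⊤ : ℕ∞) h)
    (hb3 : ∀ y ∈ Icc (-1 : ℝ) 1, |deriv (deriv (deriv h)) y| ≤ C₃)
    {a b : ℝ} (ha : a ∈ Icc (-1 : ℝ) 1) (hb : b ∈ Icc (-1 : ℝ) 1) :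
    |deriv h b - deriv h a - deriv (deriv h) a * (b - a)| ≤ C₃ * (b - a) ^ 2 := by
  set g : ℝ → ℝ := fun y => deriv h y - deriv h a - deriv (deriv h) a * (y - a) with hg
  have hsub : uIcc a b ⊆ Icc (-1 : ℝ) 1 := uIcc_subset_Icc ha hb
  have hder : ∀ x, HasDerivAt g (deriv (deriv h) x - deriv (deriv h) a) x := by
    intro x
    have h1 : HasDerivAt (deriv h) (deriv (deriv h) x) x :=
      (((contDiff_infty_iff_deriv.mp hc).2.differentiable (by simp)) x).hasDerivAt
    have h2 : HasDerivAt (fun y => deriv h a + deriv (deriv h) a * (y - a))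
        (deriv (deriv h) a) x := by
      simpa using (((hasDerivAt_id x).sub_const a).const_mul (deriv (deriv h) a)).const_add
        (deriv h a)
    have := h1.sub h2
    exact this.congr_of_eventuallyEq (Filter.Eventually.of_forall fun y => by
      simp only [hg, Pi.sub_apply]; ring)
  have hdiffg : ∀ x ∈ uIcc a b, DifferentiableAt ℝ g x := fun x _ => (hder x).differentiableAt
  have hdg : ∀ x, deriv g x = deriv (deriv h) x - deriv (deriv h) a := fun x => (hder x).deriv
  have hbound : ∀ x ∈ uIcc a b, ‖deriv g x‖ ≤ C₃ * |b - a| := by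
    intro x hx
    rw [hdg, Real.norm_eq_abs]
    calc |deriv (deriv h) x - deriv (deriv h) a| ≤ C₃ * |x - a| :=
          lip_H2 hc hb3 ha (hsub hx)
      _ ≤ C₃ * |b - a| := by
          have hC₃ : 0 ≤ C₃ := le_trans (abs_nonneg _) (hb3 a ha)
          have : |x - a| ≤ |b - a| := abs_sub_left_of_mem_uIcc hx
          exact mul_le_mul_of_nonneg_left this hC₃
  have key := (convex_uIcc a b).norm_image_sub_le_of_norm_deriv_le hdiffg hbound
    left_mem_uIcc right_mem_uIcc
  have hga : g a = 0 := by simp [hg]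
  rw [hga, sub_zero, Real.norm_eq_abs, Real.norm_eq_abs] at key
  calc |g b| ≤ C₃ * |b - a| * |b - a| := key
    _ = C₃ * (b - a) ^ 2 := by rw [mul_assoc, ← abs_mul, ← sq, abs_sq]

lemma abs_mul_le {u v U V : ℝ} (hu : |u| ≤ U) (hv : |v| ≤ V) : |u * v| ≤ U * V := by
  rw [abs_mul]
  exact mul_le_mul hu hv (abs_nonneg v) (le_trans (abs_nonneg u) hu)


lemma half_abs : |(1 / 2 : ℝ)| ≤ 1 / 2 := le_of_eq (abs_of_nonneg (by norm_num))

lemma coef1 {C₃ C₀ ρ δ m : ℝ} (hC₃0 : 0 ≤ C₃) (hC₀0 : 0 < C₀) (hmδ : m ≤ δ) :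
    1 / 2 * (C₃ * (ρ * m)) * (C₀ * ρ) ≤ C₃ * C₀ / 2 * (ρ ^ 2 * δ) := by
  linarith [mul_nonneg (mul_nonneg (mul_nonneg hC₃0 hC₀0.le) (sq_nonneg ρ))
    (sub_nonneg.mpr hmδ)]

set_option maxHeartbeats 2000000 in
lemma endgame {C₃ C₀ ε ρ δ τ₁ τ₂ T0 d W E1 E2 : ℝ}
    (hC₃0 : 0 ≤ C₃) (hC₀ : 33554432 * (1 + C₃) ≤ C₀)
    (hε : 0 < ε) (hρ : 0 < ρ) (hδ : 0 < δ)
    (hW : |W| ≤ ε * ρ ^ 2 * δ)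
    (hid1 : τ₁ - d = W + ε * E1)
    (hE1 : |E1| ≤ C₃ * (ρ ^ 2 * δ) + C₃ * C₀ / 2 * (ρ ^ 2 * δ))
    (hid2 : τ₂ - T0 = W + ε * E2)
    (hE2 : |E2| ≤ C₃ * ρ ^ 2 + C₃ * C₀ / 2 * ρ ^ 2 + C₃ * C₀ * ρ ^ 2)
    (hd1 : C₀ ^ 2 / 4 * (ε * ρ ^ 2 * δ) ≤ |d|)
    (hd2 : |d| < 4 * C₀ ^ 2 * (ε * ρ ^ 2 * δ))
    (hT1 : C₀ ^ 2 / 512 * (ε * ρ ^ 2 * max 1 δ) ≤ |T0|)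
    (hT2 : |T0| < 5 * C₀ ^ 2 * (ε * ρ ^ 2 * max 1 δ)) :
    C₀ ^ 2 * ε * ρ ^ 2 * δ / 8 ≤ |τ₁| ∧ |τ₁| ≤ 8 * (C₀ ^ 2 * ε * ρ ^ 2 * δ) ∧
    C₀ ^ 2 * ε * ρ ^ 2 * max 1 δ / 1000 ≤ |τ₂| ∧
    |τ₂| ≤ 1000 * (C₀ ^ 2 * ε * ρ ^ 2 * max 1 δ) := by
  have hC₀1 : (1:ℝ) ≤ C₀ := by linarith
  have hC₀0 : (0:ℝ) < C₀ := by linarith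
  have hmax1 : (1:ℝ) ≤ max 1 δ := le_max_left _ _
  have hmaxδ : δ ≤ max 1 δ := le_max_right _ _
  have hM0 : 0 ≤ ε * ρ ^ 2 * δ := by positivity
  have hN0 : 0 ≤ ε * ρ ^ 2 * max 1 δ := by positivity
  have hMN : ε * ρ ^ 2 * δ ≤ ε * ρ ^ 2 * max 1 δ :=
    mul_le_mul_of_nonneg_left hmaxδ (by positivity)
  have hεE1 : |ε * E1| ≤ ε * (C₃ * (ρ ^ 2 * δ) + C₃ * C₀ / 2 * (ρ ^ 2 * δ)) := by
    rw [abs_mul, abs_of_pos hε]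
    exact mul_le_mul_of_nonneg_left hE1 hε.le
  have hεE2 : |ε * E2| ≤ ε * (C₃ * ρ ^ 2 + C₃ * C₀ / 2 * ρ ^ 2 + C₃ * C₀ * ρ ^ 2) := by
    rw [abs_mul, abs_of_pos hε]
    exact mul_le_mul_of_nonneg_left hE2 hε.le
  have key1 : |τ₁ - d| ≤ (1 + C₃ + C₃ * C₀ / 2) * (ε * ρ ^ 2 * δ) := by
    rw [hid1]
    linarith [abs_add_le W (ε * E1)]
  have key2 : |τ₂ - T0| ≤ (1 + C₃ + 3 / 2 * (C₃ * C₀)) * (ε * ρ ^ 2 * max 1 δ) := by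
    rw [hid2]
    linarith [abs_add_le W (ε * E2),
      mul_nonneg (mul_nonneg (mul_nonneg hC₃0 hC₀0.le)
        (mul_nonneg hε.le (sq_nonneg ρ))) (sub_nonneg.mpr hmax1),
      mul_nonneg (mul_nonneg hC₃0 (mul_nonneg hε.le (sq_nonneg ρ)))
        (sub_nonneg.mpr hmax1)]
  have hnum1 : (1 + C₃ + C₃ * C₀ / 2) * (ε * ρ ^ 2 * δ) ≤ C₀ ^ 2 / 8 * (ε * ρ ^ 2 * δ) := by
    apply mul_le_mul_of_nonneg_right _ hM0
    linarith [mul_le_mul_of_nonneg_right hC₀ hC₀0.le,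
      mul_nonneg hC₃0 (sub_nonneg.mpr hC₀1)]
  have hnum1b : C₀ ^ 2 / 8 * (ε * ρ ^ 2 * δ) ≤ 4 * C₀ ^ 2 * (ε * ρ ^ 2 * δ) := by
    nlinarith [mul_nonneg (sq_nonneg C₀) hM0]
  have hnum2 : (1 + C₃ + 3 / 2 * (C₃ * C₀)) * (ε * ρ ^ 2 * max 1 δ)
      ≤ 61 / 64000 * C₀ ^ 2 * (ε * ρ ^ 2 * max 1 δ) := by
    apply mul_le_mul_of_nonneg_right _ hN0
    linarith [mul_le_mul_of_nonneg_right hC₀ hC₀0.le,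
      mul_nonneg hC₃0 (sub_nonneg.mpr hC₀1)]
  have hnum2b : 61 / 64000 * C₀ ^ 2 * (ε * ρ ^ 2 * max 1 δ)
      ≤ 995 * C₀ ^ 2 * (ε * ρ ^ 2 * max 1 δ) := by
    linarith [mul_nonneg (sq_nonneg C₀) hN0]
  have t1 := abs_sub_abs_le_abs_sub τ₁ d
  have t1' := abs_sub_abs_le_abs_sub d τ₁
  have t1c : |d - τ₁| = |τ₁ - d| := abs_sub_comm _ _
  have t2 := abs_sub_abs_le_abs_sub τ₂ T0
  have t2' := abs_sub_abs_le_abs_sub T0 τ₂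
  have t2c : |T0 - τ₂| = |τ₂ - T0| := abs_sub_comm _ _
  exact ⟨by linarith, by linarith, by linarith, by linarith⟩

set_option maxHeartbeats 2000000 in
/-- Lemma 3.3 (Lemma `sizeofdeltas`): on an admissible pair of type 1 at scale `δ`,
`|τ_{z₁}(z₁,z₂)| ∼₈ C₀² ε ρ² δ` and `|τ_{z₂}(z₁,z₂)| ∼₁₀₀₀ C₀² ε ρ² (1 ∨ δ)`. -/
theorem sizeofdeltas_type1 (C₃ : ℝ) (hC₃ : 0 < C₃) (Cl : ℕ → ℝ) :
    ∃ C₀₀ : ℝ, 1 ≤ C₀₀ ∧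
    ∀ h : ℝ → ℝ, CubicType C₃ Cl h →
    ∀ ε ρ δ C₀ : ℝ, 0 < ε → ε ≤ 1 → 0 < ρ → ρ ≤ 1 → 0 < δ → ε * ρ ^ 2 * δ ≤ 1 →
      IsDyadic ρ → IsDyadic δ → IsDyadic C₀ → C₀₀ ≤ C₀ →
    ∀ j₁ j₂ : ℤ, C₀ / 8 < |(j₂ : ℝ) - (j₁ : ℝ)| → |(j₂ : ℝ) - (j₁ : ℝ)| < C₀ / 2 →
      -1 ≤ (j₁ : ℝ) * ρ → (j₁ : ℝ) * ρ + ρ ≤ 1 → -1 ≤ (j₂ : ℝ) * ρ → (j₂ : ℝ) * ρ + ρ ≤ 1 →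
    ∀ x₁0 y₁0 t₂0 : ℝ, Adm1 h ε ρ δ C₀ j₁ j₂ x₁0 y₁0 t₂0 →
    ∀ z₁ ∈ U1set h ε ρ δ x₁0 y₁0, ∀ z₂ ∈ U2set h ε ρ δ t₂0 y₁0 ((j₂ : ℝ) * ρ),
      C₀ ^ 2 * ε * ρ ^ 2 * δ / 8 ≤ |tau ε h z₁ z₁ z₂| ∧
      |tau ε h z₁ z₁ z₂| ≤ 8 * (C₀ ^ 2 * ε * ρ ^ 2 * δ) ∧
      C₀ ^ 2 * ε * ρ ^ 2 * max 1 δ / 1000 ≤ |tau ε h z₂ z₁ z₂| ∧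
      |tau ε h z₂ z₁ z₂| ≤ 1000 * (C₀ ^ 2 * ε * ρ ^ 2 * max 1 δ) := by
  refine ⟨33554432 * (1 + C₃), by nlinarith, ?_⟩
  intro h hcub ε ρ δ C₀ hε hε1 hρ hρ1 hδ hMle _ _ _ hC₀₀ j₁ j₂ hj1 hj2 hI1a hI1b hI2a hI2b
    x₁0 y₁0 t₂0 hadm z₁ hz₁ z₂ hz₂
  obtain ⟨hsm, -, -, -, hb3', -⟩ := hcub
  have hb3 : ∀ y ∈ Icc (-1 : ℝ) 1, |deriv (deriv (deriv h)) y| ≤ C₃ :=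
    fun y hy => (hb3' y hy).2
  obtain ⟨-, hx10, -, ht20, -, hy10a, hy10b, hd1, hd2, hT1, hT2⟩ := hadm
  simp only [U1set, Set.mem_setOf_eq] at hz₁
  simp only [U2set, Set.mem_setOf_eq] at hz₂
  obtain ⟨hy1a, hy1b, ha1a, ha1b⟩ := hz₁
  obtain ⟨hy2a, hy2b, hb2a, hb2b⟩ := hz₂
  -- numeric basics
  have hC₃0 : (0:ℝ) ≤ C₃ := hC₃.le
  have hC₀ : (33554432:ℝ) * (1 + C₃) ≤ C₀ := hC₀₀
  have hC₀1 : (1:ℝ) ≤ C₀ := by clear * - hC₀ hC₃0; nlinarith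
  have hC₀2 : (2:ℝ) ≤ C₀ := by clear * - hC₀ hC₃0; nlinarith
  have hC₀0 : (0:ℝ) < C₀ := by linarith
  have hmin1 : min 1 δ ≤ 1 := min_le_left _ _
  have hminδ : min 1 δ ≤ δ := min_le_right _ _
  have hmin0 : (0:ℝ) ≤ min 1 δ := le_min (by norm_num) hδ.le
  have hmax1 : (1:ℝ) ≤ max 1 δ := le_max_left _ _
  have hmaxδ : δ ≤ max 1 δ := le_max_right _ _
  have hM0 : 0 ≤ ε * ρ ^ 2 * δ := by positivity
  have hN0 : 0 ≤ ε * ρ ^ 2 * max 1 δ := by positivity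
  have hMN : ε * ρ ^ 2 * δ ≤ ε * ρ ^ 2 * max 1 δ :=
    mul_le_mul_of_nonneg_left hmaxδ (by positivity)
  have hρmin0 : 0 ≤ ρ * min 1 δ := mul_nonneg hρ.le hmin0
  have hρminρ : ρ * min 1 δ ≤ ρ := by clear * - hmin1 hρ; nlinarith
  -- interval memberships
  have hy10I : y₁0 ∈ Icc (-1 : ℝ) 1 := ⟨by linarith, by linarith⟩
  have hy1I : z₁.2 ∈ Icc (-1 : ℝ) 1 := ⟨by linarith, by linarith⟩
  have hy20I : (j₂ : ℝ) * ρ ∈ Icc (-1 : ℝ) 1 := ⟨hI2a, by linarith⟩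
  have hy2I : z₂.2 ∈ Icc (-1 : ℝ) 1 := ⟨by linarith, by linarith⟩
  obtain ⟨hjl, hjr⟩ := abs_lt.mp hj2
  have ejl : -(C₀ / 2) * ρ ≤ ((j₂ : ℝ) - j₁) * ρ :=
    mul_le_mul_of_nonneg_right hjl.le hρ.le
  have ejr : ((j₂ : ℝ) - j₁) * ρ ≤ C₀ / 2 * ρ :=
    mul_le_mul_of_nonneg_right hjr.le hρ.le
  have eρ : ρ ≤ C₀ / 2 * ρ := by clear * - hC₀2 hρ; nlinarith
  have hy21 : |z₂.2 - z₁.2| ≤ C₀ * ρ := by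
    clear * - hy2a hy2b hy1a hy1b hy10a hy10b ejl ejr eρ hρmin0 hρminρ
    rw [abs_le]; constructor <;> nlinarith
  have hy201 : |(j₂ : ℝ) * ρ - y₁0| ≤ C₀ * ρ := by
    clear * - hy10a hy10b ejl ejr eρ hρmin0 hρminρ
    rw [abs_le]; constructor <;> nlinarith
  have hdiff2 : |(z₂.2 - (j₂ : ℝ) * ρ) - (z₁.2 - y₁0)| ≤ 2 * ρ := by
    clear * - hy2a hy2b hy1a hy1b hρmin0 hρminρ
    rw [abs_le]; constructor <;> nlinarith
  -- Taylor / Lipschitz estimates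
  have hAbase : |deriv h y₁0 - deriv h z₁.2 + deriv (deriv h) y₁0 * (z₁.2 - y₁0)| ≤
      C₃ * (z₁.2 - y₁0) ^ 2 := by
    have := taylor_H1 hsm hb3 hy10I hy1I
    rw [show deriv h y₁0 - deriv h z₁.2 + deriv (deriv h) y₁0 * (z₁.2 - y₁0) =
      -(deriv h z₁.2 - deriv h y₁0 - deriv (deriv h) y₁0 * (z₁.2 - y₁0)) by ring, abs_neg]
    exact this
  have hsq1 : (z₁.2 - y₁0) ^ 2 ≤ ρ ^ 2 * δ := by
    clear * - hy1a hy1b hminδ hmin1 hmin0 hδ hρ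
    nlinarith [mul_self_le_mul_self hy1a hy1b.le,
      mul_le_mul_of_nonneg_left (mul_le_mul hminδ hmin1 hmin0 hδ.le) (sq_nonneg ρ)]
  have hsq2 : (z₁.2 - y₁0) ^ 2 ≤ ρ ^ 2 := by
    clear * - hy1a hy1b hρminρ
    nlinarith [mul_self_le_mul_self hy1a (le_trans hy1b.le hρminρ)]
  have hA1bd : |deriv h y₁0 - deriv h z₁.2 + deriv (deriv h) y₁0 * (z₁.2 - y₁0)| ≤
      C₃ * (ρ ^ 2 * δ) :=
    le_trans hAbase (mul_le_mul_of_nonneg_left hsq1 hC₃0)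
  have hA2bd : |deriv h y₁0 - deriv h z₁.2 + deriv (deriv h) y₁0 * (z₁.2 - y₁0)| ≤
      C₃ * ρ ^ 2 :=
    le_trans hAbase (mul_le_mul_of_nonneg_left hsq2 hC₃0)
  have hL1 : |deriv (deriv h) y₁0 - deriv (deriv h) z₁.2| ≤ C₃ * (ρ * min 1 δ) := by
    have := lip_H2 hsm hb3 hy1I hy10I
    calc |deriv (deriv h) y₁0 - deriv (deriv h) z₁.2| ≤ C₃ * |y₁0 - z₁.2| := this
      _ ≤ C₃ * (ρ * min 1 δ) := by
          apply mul_le_mul_of_nonneg_left _ hC₃0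
          rw [abs_le]; constructor <;> linarith
  have hL2 : |deriv (deriv h) ((j₂ : ℝ) * ρ) - deriv (deriv h) z₂.2| ≤ C₃ * ρ := by
    have := lip_H2 hsm hb3 hy2I hy20I
    calc |deriv (deriv h) ((j₂ : ℝ) * ρ) - deriv (deriv h) z₂.2|
        ≤ C₃ * |(j₂ : ℝ) * ρ - z₂.2| := this
      _ ≤ C₃ * ρ := by
          apply mul_le_mul_of_nonneg_left _ hC₃0
          rw [abs_le]; constructor <;> linarith
  have hL3 : |deriv (deriv h) y₁0 - deriv (deriv h) ((j₂ : ℝ) * ρ)| ≤ C₃ * (C₀ * ρ) := by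
    have := lip_H2 hsm hb3 hy20I hy10I
    calc |deriv (deriv h) y₁0 - deriv (deriv h) ((j₂ : ℝ) * ρ)|
        ≤ C₃ * |y₁0 - (j₂ : ℝ) * ρ| := this
      _ ≤ C₃ * (C₀ * ρ) := by
          apply mul_le_mul_of_nonneg_left _ hC₃0
          rw [abs_sub_comm]
          exact hy201
  -- identities
  have hid1 : tau ε h z₁ z₁ z₂ - (t₂0 - x₁0) =
      ((z₂.1 - t₂0 + ε * (deriv h z₂.2 - deriv h y₁0
          - deriv (deriv h) y₁0 / 2 * (z₂.2 - y₁0)))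
        - (z₁.1 - x₁0 + ε * (deriv (deriv h) y₁0 / 2) * (z₁.2 - y₁0)))
      + ε * ((deriv h y₁0 - deriv h z₁.2 + deriv (deriv h) y₁0 * (z₁.2 - y₁0))
          + 1 / 2 * (deriv (deriv h) y₁0 - deriv (deriv h) z₁.2) * (z₂.2 - z₁.2)) := by
    simp only [tau]; ring
  have hid2 : tau ε h z₂ z₁ z₂
      - tau ε h (x20 h ε t₂0 y₁0 ((j₂ : ℝ) * ρ), (j₂ : ℝ) * ρ) (x₁0, y₁0)
          (x20 h ε t₂0 y₁0 ((j₂ : ℝ) * ρ), (j₂ : ℝ) * ρ) =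
      ((z₂.1 - t₂0 + ε * (deriv h z₂.2 - deriv h y₁0
          - deriv (deriv h) y₁0 / 2 * (z₂.2 - y₁0)))
        - (z₁.1 - x₁0 + ε * (deriv (deriv h) y₁0 / 2) * (z₁.2 - y₁0)))
      + ε * ((deriv h y₁0 - deriv h z₁.2 + deriv (deriv h) y₁0 * (z₁.2 - y₁0))
          + (1 / 2 * (deriv (deriv h) ((j₂ : ℝ) * ρ) - deriv (deriv h) z₂.2) * (z₂.2 - z₁.2)
          + 1 / 2 * (deriv (deriv h) y₁0 - deriv (deriv h) ((j₂ : ℝ) * ρ))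
              * ((z₂.2 - (j₂ : ℝ) * ρ) - (z₁.2 - y₁0)))) := by
    simp only [tau, x20]; ring
  -- bound on the box-difference term
  have hB2A1 : |(z₂.1 - t₂0 + ε * (deriv h z₂.2 - deriv h y₁0
          - deriv (deriv h) y₁0 / 2 * (z₂.2 - y₁0)))
        - (z₁.1 - x₁0 + ε * (deriv (deriv h) y₁0 / 2) * (z₁.2 - y₁0))| ≤ ε * ρ ^ 2 * δ := by
    clear * - ha1a ha1b hb2a hb2b
    exact abs_le.mpr ⟨by linarith, by linarith⟩
  -- E-term bounds
  have hE1bd : |(deriv h y₁0 - deriv h z₁.2 + deriv (deriv h) y₁0 * (z₁.2 - y₁0))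
      + 1 / 2 * (deriv (deriv h) y₁0 - deriv (deriv h) z₁.2) * (z₂.2 - z₁.2)|
      ≤ C₃ * (ρ ^ 2 * δ) + C₃ * C₀ / 2 * (ρ ^ 2 * δ) :=
    le_trans (abs_add_le _ _) (add_le_add hA1bd
      (le_trans (abs_mul_le (abs_mul_le half_abs hL1) hy21) (coef1 hC₃0 hC₀0 hminδ)))
  have hE2bd : |(deriv h y₁0 - deriv h z₁.2 + deriv (deriv h) y₁0 * (z₁.2 - y₁0))
      + (1 / 2 * (deriv (deriv h) ((j₂ : ℝ) * ρ) - deriv (deriv h) z₂.2) * (z₂.2 - z₁.2)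
      + 1 / 2 * (deriv (deriv h) y₁0 - deriv (deriv h) ((j₂ : ℝ) * ρ))
          * ((z₂.2 - (j₂ : ℝ) * ρ) - (z₁.2 - y₁0)))|
      ≤ C₃ * ρ ^ 2 + (C₃ * C₀ / 2 * ρ ^ 2 + C₃ * C₀ * ρ ^ 2) := by
    refine le_trans (abs_add_le _ _) (add_le_add hA2bd (le_trans (abs_add_le _ _)
      (add_le_add ?_ ?_)))
    · calc |1 / 2 * (deriv (deriv h) ((j₂ : ℝ) * ρ) - deriv (deriv h) z₂.2)
          * (z₂.2 - z₁.2)| ≤ 1 / 2 * (C₃ * ρ) * (C₀ * ρ) :=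
            abs_mul_le (abs_mul_le half_abs hL2) hy21
        _ = C₃ * C₀ / 2 * ρ ^ 2 := by ring
    · calc |1 / 2 * (deriv (deriv h) y₁0 - deriv (deriv h) ((j₂ : ℝ) * ρ))
          * ((z₂.2 - (j₂ : ℝ) * ρ) - (z₁.2 - y₁0))|
          ≤ 1 / 2 * (C₃ * (C₀ * ρ)) * (2 * ρ) :=
            abs_mul_le (abs_mul_le half_abs hL3) hdiff2
        _ = C₃ * C₀ * ρ ^ 2 := by ring
  have hE2bd' : |(deriv h y₁0 - deriv h z₁.2 + deriv (deriv h) y₁0 * (z₁.2 - y₁0))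
      + (1 / 2 * (deriv (deriv h) ((j₂ : ℝ) * ρ) - deriv (deriv h) z₂.2) * (z₂.2 - z₁.2)
      + 1 / 2 * (deriv (deriv h) y₁0 - deriv (deriv h) ((j₂ : ℝ) * ρ))
          * ((z₂.2 - (j₂ : ℝ) * ρ) - (z₁.2 - y₁0)))|
      ≤ C₃ * ρ ^ 2 + C₃ * C₀ / 2 * ρ ^ 2 + C₃ * C₀ * ρ ^ 2 := by
    refine le_trans hE2bd (le_of_eq ?_); ring
  exact endgame hC₃0 hC₀ hε hρ hδ hB2A1 hid1 hE1bd hid2 hE2bd' hd1 hd2 hT1 hT2
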